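/- For all distinct positive real numbers a and b, L(I(a,b), G(a,b)) < L(a,b). -/

import Mathlib

noncomputable def G (a b : ℝ) : ℝ := Real.sqrt (a * b)
noncomputable def L (a b : ℝ) : ℝ := (a - b) / (Real.log a - Real.log b)
noncomputable def I (a b : ℝ) : ℝ := (1 / Real.exp 1) * (a ^ a / b ^ b) ^ (1 / (a - b))

private noncomputable def aK0 : ℝ → ℝ := fun y => Real.sinh y ^ 3 + y ^ 2 * Real.sinh y ^ 3 + y ^ 3 + y ^ 3 * Real.cosh y - y ^ 2 * Real.sinh y - y ^ 2 * (Real.sinh y * Real.cosh y) - y ^ 2 * (Real.sinh y * Real.cosh y ^ 2)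
private noncomputable def aK1 : ℝ → ℝ := fun y => 3 * (Real.sinh y ^ 2 * Real.cosh y) + 2 * (y ^ 1 * Real.sinh y ^ 3) + 3 * (y ^ 2) + 2 * (y ^ 2 * Real.cosh y) + y ^ 2 * (Real.sinh y ^ 2 * Real.cosh y) + y ^ 3 * Real.sinh y - 2 * (y ^ 1 * Real.sinh y) - 2 * (y ^ 1 * (Real.sinh y * Real.cosh y)) - 2 * (y ^ 1 * (Real.sinh y * Real.cosh y ^ 2)) - y ^ 2 * Real.cosh y ^ 2 - y ^ 2 * Real.cosh y ^ 3 - y ^ 2 * Real.sinh y ^ 2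
private noncomputable def aK2 : ℝ → ℝ := fun y => 4 * (Real.sinh y * Real.cosh y ^ 2) + 5 * (Real.sinh y ^ 3) + 6 * (y ^ 1) + 2 * (y ^ 1 * Real.cosh y) + 4 * (y ^ 1 * (Real.sinh y ^ 2 * Real.cosh y)) + 5 * (y ^ 2 * Real.sinh y) + y ^ 2 * Real.sinh y ^ 3 + y ^ 3 * Real.cosh y - 2 * (Real.sinh y) - 2 * (Real.sinh y * Real.cosh y) - 4 * (y ^ 1 * Real.cosh y ^ 2) - 4 * (y ^ 1 * Real.cosh y ^ 3) - 4 * (y ^ 1 * Real.sinh y ^ 2) - 4 * (y ^ 2 * (Real.sinh y * Real.cosh y)) - y ^ 2 * (Real.sinh y * Real.cosh y ^ 2)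
private noncomputable def aK3 : ℝ → ℝ := fun y => (6 : ℝ) + 27 * (Real.sinh y ^ 2 * Real.cosh y) + 12 * (y ^ 1 * Real.sinh y) + 6 * (y ^ 1 * Real.sinh y ^ 3) + 8 * (y ^ 2 * Real.cosh y) + y ^ 2 * (Real.sinh y ^ 2 * Real.cosh y) + y ^ 3 * Real.sinh y - 6 * (Real.cosh y ^ 2) - 6 * (Real.sinh y ^ 2) - 24 * (y ^ 1 * (Real.sinh y * Real.cosh y)) - 6 * (y ^ 1 * (Real.sinh y * Real.cosh y ^ 2)) - 4 * (y ^ 2 * Real.cosh y ^ 2) - y ^ 2 * Real.cosh y ^ 3 - 4 * (y ^ 2 * Real.sinh y ^ 2)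
private noncomputable def aK4 : ℝ → ℝ := fun y => 12 * (Real.sinh y) + 48 * (Real.sinh y * Real.cosh y ^ 2) + 33 * (Real.sinh y ^ 3) + 28 * (y ^ 1 * Real.cosh y) + 8 * (y ^ 1 * (Real.sinh y ^ 2 * Real.cosh y)) + 11 * (y ^ 2 * Real.sinh y) + y ^ 2 * Real.sinh y ^ 3 + y ^ 3 * Real.cosh y - 48 * (Real.sinh y * Real.cosh y) - 32 * (y ^ 1 * Real.cosh y ^ 2) - 8 * (y ^ 1 * Real.cosh y ^ 3) - 32 * (y ^ 1 * Real.sinh y ^ 2) - 16 * (y ^ 2 * (Real.sinh y * Real.cosh y)) - y ^ 2 * (Real.sinh y * Real.cosh y ^ 2)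
private noncomputable def aK5 : ℝ → ℝ := fun y => 40 * (Real.cosh y) + 40 * (Real.cosh y ^ 3) + 203 * (Real.sinh y ^ 2 * Real.cosh y) + 50 * (y ^ 1 * Real.sinh y) + 10 * (y ^ 1 * Real.sinh y ^ 3) + 14 * (y ^ 2 * Real.cosh y) + y ^ 2 * (Real.sinh y ^ 2 * Real.cosh y) + y ^ 3 * Real.sinh y - 80 * (Real.cosh y ^ 2) - 80 * (Real.sinh y ^ 2) - 160 * (y ^ 1 * (Real.sinh y * Real.cosh y)) - 10 * (y ^ 1 * (Real.sinh y * Real.cosh y ^ 2)) - 16 * (y ^ 2 * Real.cosh y ^ 2) - y ^ 2 * Real.cosh y ^ 3 - 16 * (y ^ 2 * Real.sinh y ^ 2)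
private noncomputable def aK6 : ℝ → ℝ := fun y => 90 * (Real.sinh y) + 516 * (Real.sinh y * Real.cosh y ^ 2) + 213 * (Real.sinh y ^ 3) + 78 * (y ^ 1 * Real.cosh y) + 12 * (y ^ 1 * (Real.sinh y ^ 2 * Real.cosh y)) + 17 * (y ^ 2 * Real.sinh y) + y ^ 2 * Real.sinh y ^ 3 + y ^ 3 * Real.cosh y - 480 * (Real.sinh y * Real.cosh y) - 192 * (y ^ 1 * Real.cosh y ^ 2) - 12 * (y ^ 1 * Real.cosh y ^ 3) - 192 * (y ^ 1 * Real.sinh y ^ 2) - 64 * (y ^ 2 * (Real.sinh y * Real.cosh y)) - y ^ 2 * (Real.sinh y * Real.cosh y ^ 2)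
private noncomputable def aK7 : ℝ → ℝ := fun y => 168 * (Real.cosh y) + 504 * (Real.cosh y ^ 3) + 1683 * (Real.sinh y ^ 2 * Real.cosh y) + 112 * (y ^ 1 * Real.sinh y) + 14 * (y ^ 1 * Real.sinh y ^ 3) + 20 * (y ^ 2 * Real.cosh y) + y ^ 2 * (Real.sinh y ^ 2 * Real.cosh y) + y ^ 3 * Real.sinh y - 672 * (Real.cosh y ^ 2) - 672 * (Real.sinh y ^ 2) - 896 * (y ^ 1 * (Real.sinh y * Real.cosh y)) - 14 * (y ^ 1 * (Real.sinh y * Real.cosh y ^ 2)) - 64 * (y ^ 2 * Real.cosh y ^ 2) - y ^ 2 * Real.cosh y ^ 3 - 64 * (y ^ 2 * Real.sinh y ^ 2)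
private noncomputable def aK8 : ℝ → ℝ := fun y => 280 * (Real.sinh y) + 4864 * (Real.sinh y * Real.cosh y ^ 2) + 1697 * (Real.sinh y ^ 3) + 152 * (y ^ 1 * Real.cosh y) + 16 * (y ^ 1 * (Real.sinh y ^ 2 * Real.cosh y)) + 23 * (y ^ 2 * Real.sinh y) + y ^ 2 * Real.sinh y ^ 3 + y ^ 3 * Real.cosh y - 3584 * (Real.sinh y * Real.cosh y) - 1024 * (y ^ 1 * Real.cosh y ^ 2) - 16 * (y ^ 1 * Real.cosh y ^ 3) - 1024 * (y ^ 1 * Real.sinh y ^ 2) - 256 * (y ^ 2 * (Real.sinh y * Real.cosh y)) - y ^ 2 * (Real.sinh y * Real.cosh y ^ 2)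
private noncomputable def aK9 : ℝ → ℝ := fun y => 432 * (Real.cosh y) + 4848 * (Real.cosh y ^ 3) + 14835 * (Real.sinh y ^ 2 * Real.cosh y) + 198 * (y ^ 1 * Real.sinh y) + 18 * (y ^ 1 * Real.sinh y ^ 3) + 26 * (y ^ 2 * Real.cosh y) + y ^ 2 * (Real.sinh y ^ 2 * Real.cosh y) + y ^ 3 * Real.sinh y - 4608 * (Real.cosh y ^ 2) - 4608 * (Real.sinh y ^ 2) - 4608 * (y ^ 1 * (Real.sinh y * Real.cosh y)) - 18 * (y ^ 1 * (Real.sinh y * Real.cosh y ^ 2)) - 256 * (y ^ 2 * Real.cosh y ^ 2) - y ^ 2 * Real.cosh y ^ 3 - 256 * (y ^ 2 * Real.sinh y ^ 2)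

private lemma aK0_deriv (y : ℝ) : HasDerivAt aK0 (aK1 y) y := by
  have hs := Real.hasDerivAt_sinh y
  have hc := Real.hasDerivAt_cosh y
  exact HasDerivAt.congr_deriv (((((((hs.pow 3).add ((hasDerivAt_pow 2 y).mul (hs.pow 3))).add (hasDerivAt_pow 3 y)).add ((hasDerivAt_pow 3 y).mul hc)).sub ((hasDerivAt_pow 2 y).mul hs)).sub ((hasDerivAt_pow 2 y).mul (hs.mul hc))).sub ((hasDerivAt_pow 2 y).mul (hs.mul (hc.pow 2)))) (by unfold aK1; simp only [Pi.pow_apply]; norm_num; ring)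
private lemma aK1_deriv (y : ℝ) : HasDerivAt aK1 (aK2 y) y := by
  have hs := Real.hasDerivAt_sinh y
  have hc := Real.hasDerivAt_cosh y
  exact HasDerivAt.congr_deriv ((((((((((((((hs.pow 2).mul hc).const_mul (3 : ℝ)).add (((hasDerivAt_pow 1 y).mul (hs.pow 3)).const_mul (2 : ℝ))).add ((hasDerivAt_pow 2 y).const_mul (3 : ℝ))).add (((hasDerivAt_pow 2 y).mul hc).const_mul (2 : ℝ))).add ((hasDerivAt_pow 2 y).mul ((hs.pow 2).mul hc))).add ((hasDerivAt_pow 3 y).mul hs)).sub (((hasDerivAt_pow 1 y).mul hs).const_mul (2 : ℝ))).sub (((hasDerivAt_pow 1 y).mul (hs.mul hc)).const_mul (2 : ℝ))).sub (((hasDerivAt_pow 1 y).mul (hs.mul (hc.pow 2))).const_mul (2 : ℝ))).sub ((hasDerivAt_pow 2 y).mul (hc.pow 2))).sub ((hasDerivAt_pow 2 y).mul (hc.pow 3))).sub ((hasDerivAt_pow 2 y).mul (hs.pow 2))) (by unfold aK2; simp only [Pi.pow_apply]; norm_num; ring)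
private lemma aK2_deriv (y : ℝ) : HasDerivAt aK2 (aK3 y) y := by
  have hs := Real.hasDerivAt_sinh y
  have hc := Real.hasDerivAt_cosh y
  exact HasDerivAt.congr_deriv ((((((((((((((((hs.mul (hc.pow 2)).const_mul (4 : ℝ)).add ((hs.pow 3).const_mul (5 : ℝ))).add ((hasDerivAt_pow 1 y).const_mul (6 : ℝ))).add (((hasDerivAt_pow 1 y).mul hc).const_mul (2 : ℝ))).add (((hasDerivAt_pow 1 y).mul ((hs.pow 2).mul hc)).const_mul (4 : ℝ))).add (((hasDerivAt_pow 2 y).mul hs).const_mul (5 : ℝ))).add ((hasDerivAt_pow 2 y).mul (hs.pow 3))).add ((hasDerivAt_pow 3 y).mul hc)).sub (hs.const_mul (2 : ℝ))).sub ((hs.mul hc).const_mul (2 : ℝ))).sub (((hasDerivAt_pow 1 y).mul (hc.pow 2)).const_mul (4 : ℝ))).sub (((hasDerivAt_pow 1 y).mul (hc.pow 3)).const_mul (4 : ℝ))).sub (((hasDerivAt_pow 1 y).mul (hs.pow 2)).const_mul (4 : ℝ))).sub (((hasDerivAt_pow 2 y).mul (hs.mul hc)).const_mul (4 : ℝ))).sub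 ((hasDerivAt_pow 2 y).mul (hs.mul (hc.pow 2)))) (by unfold aK3; simp only [Pi.pow_apply]; norm_num; ring)
private lemma aK3_deriv (y : ℝ) : HasDerivAt aK3 (aK4 y) y := by
  have hs := Real.hasDerivAt_sinh y
  have hc := Real.hasDerivAt_cosh y
  exact HasDerivAt.congr_deriv ((((((((((((((hasDerivAt_const y (6 : ℝ)).add (((hs.pow 2).mul hc).const_mul (27 : ℝ))).add (((hasDerivAt_pow 1 y).mul hs).const_mul (12 : ℝ))).add (((hasDerivAt_pow 1 y).mul (hs.pow 3)).const_mul (6 : ℝ))).add (((hasDerivAt_pow 2 y).mul hc).const_mul (8 : ℝ))).add ((hasDerivAt_pow 2 y).mul ((hs.pow 2).mul hc))).add ((hasDerivAt_pow 3 y).mul hs)).sub ((hc.pow 2).const_mul (6 : ℝ))).sub ((hs.pow 2).const_mul (6 : ℝ))).sub (((hasDerivAt_pow 1 y).mul (hs.mul hc)).const_mul (24 : ℝ))).sub (((hasDerivAt_pow 1 y).mul (hs.mul (hc.pow 2))).const_mul (6 : ℝ))).sub (((hasDerivAt_pow 2 y).mul (hc.pow 2)).const_mul (4 : ℝ))).sub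 ((hasDerivAt_pow 2 y).mul (hc.pow 3))).sub (((hasDerivAt_pow 2 y).mul (hs.pow 2)).const_mul (4 : ℝ))) (by unfold aK4; simp only [Pi.pow_apply]; norm_num; ring)
private lemma aK4_deriv (y : ℝ) : HasDerivAt aK4 (aK5 y) y := by
  have hs := Real.hasDerivAt_sinh y
  have hc := Real.hasDerivAt_cosh y
  exact HasDerivAt.congr_deriv ((((((((((((((hs.const_mul (12 : ℝ)).add ((hs.mul (hc.pow 2)).const_mul (48 : ℝ))).add ((hs.pow 3).const_mul (33 : ℝ))).add (((hasDerivAt_pow 1 y).mul hc).const_mul (28 : ℝ))).add (((hasDerivAt_pow 1 y).mul ((hs.pow 2).mul hc)).const_mul (8 : ℝ))).add (((hasDerivAt_pow 2 y).mul hs).const_mul (11 : ℝ))).add ((hasDerivAt_pow 2 y).mul (hs.pow 3))).add ((hasDerivAt_pow 3 y).mul hc)).sub ((hs.mul hc).const_mul (48 : ℝ))).sub (((hasDerivAt_pow 1 y).mul (hc.pow 2)).const_mul (32 : ℝ))).sub (((hasDerivAt_pow 1 y).mul (hc.pow 3)).const_mul (8 : ℝ))).sub (((hasDerivAt_pow 1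 y).mul (hs.pow 2)).const_mul (32 : ℝ))).sub (((hasDerivAt_pow 2 y).mul (hs.mul hc)).const_mul (16 : ℝ))).sub ((hasDerivAt_pow 2 y).mul (hs.mul (hc.pow 2)))) (by unfold aK5; simp only [Pi.pow_apply]; norm_num; ring)
private lemma aK5_deriv (y : ℝ) : HasDerivAt aK5 (aK6 y) y := by
  have hs := Real.hasDerivAt_sinh y
  have hc := Real.hasDerivAt_cosh y
  exact HasDerivAt.congr_deriv (((((((((((((((hc.const_mul (40 : ℝ)).add ((hc.pow 3).const_mul (40 : ℝ))).add (((hs.pow 2).mul hc).const_mul (203 : ℝ))).add (((hasDerivAt_pow 1 y).mul hs).const_mul (50 : ℝ))).add (((hasDerivAt_pow 1 y).mul (hs.pow 3)).const_mul (10 : ℝ))).add (((hasDerivAt_pow 2 y).mul hc).const_mul (14 : ℝ))).add ((hasDerivAt_pow 2 y).mul ((hs.pow 2).mul hc))).add ((hasDerivAt_pow 3 y).mul hs)).sub ((hc.pow 2).const_mul (80 : ℝ))).sub ((hs.pow 2).const_mul (80 : ℝ))).sub (((hasDerivAt_pow 1 y).mul (hs.mul hc)).const_mul (160 : ℝ))).sub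 (((hasDerivAt_pow 1 y).mul (hs.mul (hc.pow 2))).const_mul (10 : ℝ))).sub (((hasDerivAt_pow 2 y).mul (hc.pow 2)).const_mul (16 : ℝ))).sub ((hasDerivAt_pow 2 y).mul (hc.pow 3))).sub (((hasDerivAt_pow 2 y).mul (hs.pow 2)).const_mul (16 : ℝ))) (by unfold aK6; simp only [Pi.pow_apply]; norm_num; ring)
private lemma aK6_deriv (y : ℝ) : HasDerivAt aK6 (aK7 y) y := by
  have hs := Real.hasDerivAt_sinh y
  have hc := Real.hasDerivAt_cosh y
  exact HasDerivAt.congr_deriv ((((((((((((((hs.const_mul (90 : ℝ)).add ((hs.mul (hc.pow 2)).const_mul (516 : ℝ))).add ((hs.pow 3).const_mul (213 : ℝ))).add (((hasDerivAt_pow 1 y).mul hc).const_mul (78 : ℝ))).add (((hasDerivAt_pow 1 y).mul ((hs.pow 2).mul hc)).const_mul (12 : ℝ))).add (((hasDerivAt_pow 2 y).mul hs).const_mul (17 : ℝ))).add ((hasDerivAt_pow 2 y).mul (hs.pow 3))).add ((hasDerivAt_pow 3 y).mul hc)).sub ((hs.mul hc).const_mul (480 : ℝ))).sub (((hasDerivAt_pow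 1 y).mul (hc.pow 2)).const_mul (192 : ℝ))).sub (((hasDerivAt_pow 1 y).mul (hc.pow 3)).const_mul (12 : ℝ))).sub (((hasDerivAt_pow 1 y).mul (hs.pow 2)).const_mul (192 : ℝ))).sub (((hasDerivAt_pow 2 y).mul (hs.mul hc)).const_mul (64 : ℝ))).sub ((hasDerivAt_pow 2 y).mul (hs.mul (hc.pow 2)))) (by unfold aK7; simp only [Pi.pow_apply]; norm_num; ring)
private lemma aK7_deriv (y : ℝ) : HasDerivAt aK7 (aK8 y) y := by
  have hs := Real.hasDerivAt_sinh y
  have hc := Real.hasDerivAt_cosh y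
  exact HasDerivAt.congr_deriv (((((((((((((((hc.const_mul (168 : ℝ)).add ((hc.pow 3).const_mul (504 : ℝ))).add (((hs.pow 2).mul hc).const_mul (1683 : ℝ))).add (((hasDerivAt_pow 1 y).mul hs).const_mul (112 : ℝ))).add (((hasDerivAt_pow 1 y).mul (hs.pow 3)).const_mul (14 : ℝ))).add (((hasDerivAt_pow 2 y).mul hc).const_mul (20 : ℝ))).add ((hasDerivAt_pow 2 y).mul ((hs.pow 2).mul hc))).add ((hasDerivAt_pow 3 y).mul hs)).sub ((hc.pow 2).const_mul (672 : ℝ))).sub ((hs.pow 2).const_mul (672 : ℝ))).sub (((hasDerivAt_pow 1 y).mul (hs.mul hc)).const_mul (896 : ℝ))).sub (((hasDerivAt_pow 1 y).mul (hs.mul (hc.pow 2))).const_mul (14 : ℝ))).sub (((hasDerivAt_pow 2 y).mul (hc.pow 2)).const_mul (64 : ℝ))).sub ((hasDerivAt_pow 2 y).mul (hc.pow 3))).sub (((hasDerivAt_pow 2 y).mul (hs.pow 2)).const_mul (64 : ℝ))) (by unfold aK8; simp only [Pi.pow_apply]; norm_num; ring)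
private lemma aK8_deriv (y : ℝ) : HasDerivAt aK8 (aK9 y) y := by
  have hs := Real.hasDerivAt_sinh y
  have hc := Real.hasDerivAt_cosh y
  exact HasDerivAt.congr_deriv ((((((((((((((hs.const_mul (280 : ℝ)).add ((hs.mul (hc.pow 2)).const_mul (4864 : ℝ))).add ((hs.pow 3).const_mul (1697 : ℝ))).add (((hasDerivAt_pow 1 y).mul hc).const_mul (152 : ℝ))).add (((hasDerivAt_pow 1 y).mul ((hs.pow 2).mul hc)).const_mul (16 : ℝ))).add (((hasDerivAt_pow 2 y).mul hs).const_mul (23 : ℝ))).add ((hasDerivAt_pow 2 y).mul (hs.pow 3))).add ((hasDerivAt_pow 3 y).mul hc)).sub ((hs.mul hc).const_mul (3584 : ℝ))).sub (((hasDerivAt_pow 1 y).mul (hc.pow 2)).const_mul (1024 : ℝ))).sub (((hasDerivAt_pow 1 y).mul (hc.pow 3)).const_mul (16 : ℝ))).sub (((hasDerivAt_pow 1 y).mul (hs.pow 2)).const_mul (1024 : ℝ))).sub (((hasDerivAt_pow 2 y).mul (hs.mul hc)).const_mul (256 : ℝ))).sub ((hasDerivAt_pow 2 y).mul (hs.mul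 (hc.pow 2)))) (by unfold aK9; simp only [Pi.pow_apply]; norm_num; ring)
private lemma pos_of_hasDerivAt (f f' : ℝ → ℝ) (hf : ∀ x : ℝ, HasDerivAt f (f' x) x)
    (h0 : f 0 = 0) (hp : ∀ x : ℝ, 0 < x → 0 < f' x) : ∀ x : ℝ, 0 < x → 0 < f x := by
  intro x hx
  have hmono : StrictMonoOn f (Set.Ici (0:ℝ)) := by
    apply strictMonoOn_of_deriv_pos (convex_Ici 0)
    · exact fun y _ => (hf y).continuousAt.continuousWithinAt
    · intro y hy
      rw [interior_Ici, Set.mem_Ioi] at hy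
      rw [(hf y).deriv]
      exact hp y hy
  have h := hmono Set.self_mem_Ici (Set.mem_Ici.mpr hx.le) hx
  rwa [h0] at h

private lemma cosh_ge_quad (y : ℝ) (hy : 0 ≤ y) : 1 + y^2/2 ≤ Real.cosh y := by
  have h1 : y/2 ≤ Real.sinh (y/2) := Real.self_le_sinh_iff.mpr (by linarith)
  have h2 := Real.cosh_sq (y/2)
  have h3 : Real.cosh y = Real.cosh (2*(y/2)) := by congr 1; ring
  rw [h3, Real.cosh_two_mul]
  nlinarith [h1, h2]

private lemma aK9_pos : ∀ y : ℝ, 0 < y → 0 < aK9 y := by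
  intro y hy
  have hs0 : 0 < Real.sinh y := Real.sinh_pos_iff.mpr hy
  have hc0 : (1:ℝ) ≤ Real.cosh y := Real.one_le_cosh y
  have hys : y < Real.sinh y := Real.self_lt_sinh_iff.mpr hy
  have hc2 : Real.cosh y ^ 2 = Real.sinh y ^ 2 + 1 := Real.cosh_sq y
  have hcq : 1 + y^2/2 ≤ Real.cosh y := cosh_ge_quad y hy.le
  set s := Real.sinh y
  set c := Real.cosh y
  have key : 4 * aK9 y =
      (c^2 + s^2) * (19683*c - 1024*y^2 - 18432)
      + 2*s*c * (19683*s - 9216*y)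
      + (4*y^3*s + 100*y^2*c + 720*y*s + 1437*c)
      - (291*c + 4*y^2*c + 72*y*s) * (c^2 - s^2 - 1) := by
    unfold aK9; ring
  have hz : c^2 - s^2 - 1 = 0 := by rw [hc2]; ring
  rw [hz, mul_zero, sub_zero] at key
  have hb1 : 0 ≤ (c^2 + s^2) * (19683*c - 1024*y^2 - 18432) :=
    mul_nonneg (by positivity) (by nlinarith)
  have hb2 : 0 ≤ 2*s*c * (19683*s - 9216*y) :=
    mul_nonneg (by nlinarith) (by nlinarith)
  have hb3 : 0 < 4*y^3*s + 100*y^2*c + 720*y*s + 1437*c := by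
    have t1 : 0 < y^3*s := mul_pos (pow_pos hy 3) hs0
    have t2 : 0 < y^2*c := mul_pos (pow_pos hy 2) (by linarith)
    have t3 : 0 < y*s := mul_pos hy hs0
    linarith
  linarith

private lemma aK8_pos : ∀ y : ℝ, 0 < y → 0 < aK8 y :=
  pos_of_hasDerivAt aK8 aK9 aK8_deriv (by unfold aK8; norm_num) aK9_pos
private lemma aK7_pos : ∀ y : ℝ, 0 < y → 0 < aK7 y :=
  pos_of_hasDerivAt aK7 aK8 aK7_deriv (by unfold aK7; norm_num) aK8_pos
private lemma aK6_pos : ∀ y : ℝ, 0 < y → 0 < aK6 y :=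
  pos_of_hasDerivAt aK6 aK7 aK6_deriv (by unfold aK6; norm_num) aK7_pos
private lemma aK5_pos : ∀ y : ℝ, 0 < y → 0 < aK5 y :=
  pos_of_hasDerivAt aK5 aK6 aK5_deriv (by unfold aK5; norm_num) aK6_pos
private lemma aK4_pos : ∀ y : ℝ, 0 < y → 0 < aK4 y :=
  pos_of_hasDerivAt aK4 aK5 aK4_deriv (by unfold aK4; norm_num) aK5_pos
private lemma aK3_pos : ∀ y : ℝ, 0 < y → 0 < aK3 y :=
  pos_of_hasDerivAt aK3 aK4 aK3_deriv (by unfold aK3; norm_num) aK4_pos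
private lemma aK2_pos : ∀ y : ℝ, 0 < y → 0 < aK2 y :=
  pos_of_hasDerivAt aK2 aK3 aK2_deriv (by unfold aK2; norm_num) aK3_pos
private lemma aK1_pos : ∀ y : ℝ, 0 < y → 0 < aK1 y :=
  pos_of_hasDerivAt aK1 aK2 aK1_deriv (by unfold aK1; norm_num) aK2_pos
private lemma aK0_pos : ∀ y : ℝ, 0 < y → 0 < aK0 y :=
  pos_of_hasDerivAt aK0 aK1 aK0_deriv (by unfold aK0; norm_num) aK1_pos

private lemma sinh_lt_mul_cosh (y : ℝ) (hy : 0 < y) : 0 < y * Real.cosh y - Real.sinh y := by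
  have h := pos_of_hasDerivAt (fun z : ℝ => z ^ 1 * Real.cosh z - Real.sinh z)
      (fun z : ℝ => z * Real.sinh z)
      (fun z => by
        have hs := Real.hasDerivAt_sinh z
        have hc := Real.hasDerivAt_cosh z
        exact HasDerivAt.congr_deriv (((hasDerivAt_pow 1 z).mul hc).sub hs) (by ring))
      (by norm_num)
      (fun z hz => mul_pos hz (Real.sinh_pos_iff.mpr hz)) y hy
  simpa using h
private lemma Fd_num_identity (y si co : ℝ) (hsi : si ≠ 0) (hy : y ≠ 0)
    (hD : y + y * co - si ≠ 0) :
    ((1 + y * si) / (y + y * co - si) - 1 / y - (si * co - y) / si ^ 2)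
      * (y * si ^ 2 * (y + y * co - si))
    = si ^ 3 + y ^ 2 * si ^ 3 + y ^ 3 + y ^ 3 * co - y ^ 2 * si - y ^ 2 * (si * co)
      - y ^ 2 * (si * co ^ 2) := by
  have hD' : y * (1 + co) - si ≠ 0 := by rwa [show y * (1 + co) - si = y + y * co - si by ring]
  field_simp
  ring

private lemma core_ineq (x : ℝ) (hx : 0 < x) :
    Real.exp (x * Real.cosh x / Real.sinh x - 1) < 1 + (x * Real.cosh x - Real.sinh x) / x := by
  have hDp : ∀ y : ℝ, 0 < y → 0 < y + y * Real.cosh y - Real.sinh y := by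
    intro y hy
    have := sinh_lt_mul_cosh y hy
    linarith
  have hsp : ∀ y : ℝ, 0 < y → 0 < Real.sinh y := fun y hy => Real.sinh_pos_iff.mpr hy
  set F : ℝ → ℝ := fun y =>
    Real.log (y + y * Real.cosh y - Real.sinh y) - Real.log y
      - y * Real.cosh y / Real.sinh y + 1 with hF
  set Fd : ℝ → ℝ := fun y =>
    (1 + y * Real.sinh y) / (y + y * Real.cosh y - Real.sinh y) - 1 / y
      - (Real.sinh y * Real.cosh y - y) / Real.sinh y ^ 2 with hFd
  have hFderiv : ∀ y : ℝ, 0 < y → HasDerivAt F (Fd y) y := by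
    intro y hy
    have hs := Real.hasDerivAt_sinh y
    have hc := Real.hasDerivAt_cosh y
    have hid : HasDerivAt (fun z : ℝ => z) 1 y := hasDerivAt_id y
    have h1 : HasDerivAt (fun z : ℝ => z + z * Real.cosh z - Real.sinh z)
        (1 + (1 * Real.cosh y + y * Real.sinh y) - Real.cosh y) y :=
      (hid.add (hid.mul hc)).sub hs
    have h3 := h1.log (ne_of_gt (hDp y hy))
    have h4 : HasDerivAt Real.log y⁻¹ y := Real.hasDerivAt_log (ne_of_gt hy)
    have h2 : HasDerivAt (fun z : ℝ => z * Real.cosh z / Real.sinh z)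
        (((1 * Real.cosh y + y * Real.sinh y) * Real.sinh y
          - y * Real.cosh y * Real.cosh y) / Real.sinh y ^ 2) y :=
      (hid.mul hc).div hs (ne_of_gt (hsp y hy))
    have hco := ((h3.sub h4).sub h2).add_const (1:ℝ)
    have hcs : Real.cosh y ^ 2 = Real.sinh y ^ 2 + 1 := Real.cosh_sq y
    exact HasDerivAt.congr_deriv hco (by
      unfold Fd
      linear_combination (y / Real.sinh y ^ 2) * hcs)
  have hFdpos : ∀ y : ℝ, 0 < y → 0 < Fd y := by
    intro y hy
    have hs0 := hsp y hy
    have hD0 := hDp y hy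
    have hden : 0 < y * Real.sinh y ^ 2 * (y + y * Real.cosh y - Real.sinh y) :=
      mul_pos (mul_pos hy (pow_pos hs0 2)) hD0
    have hnum : Fd y * (y * Real.sinh y ^ 2 * (y + y * Real.cosh y - Real.sinh y))
        = aK0 y := by
      have h := Fd_num_identity y (Real.sinh y) (Real.cosh y)
        (ne_of_gt hs0) (ne_of_gt hy) (ne_of_gt hD0)
      unfold aK0
      exact h
    have h0 := aK0_pos y hy
    nlinarith [hnum, hden, h0]
  have hmono : StrictMonoOn F (Set.Ioi (0:ℝ)) := by
    apply strictMonoOn_of_deriv_pos (convex_Ioi 0)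
    · exact fun y hy => (hFderiv y hy).continuousAt.continuousWithinAt
    · intro y hy
      rw [interior_Ioi] at hy
      rw [(hFderiv y hy).deriv]
      exact hFdpos y hy
  have hlim : Filter.Tendsto F (nhdsWithin 0 (Set.Ioi 0)) (nhds 0) := by
    have h1 : Filter.Tendsto (fun y : ℝ => Real.sinh y / y) (nhdsWithin 0 (Set.Ioi 0)) (nhds 1) := by
      have h := hasDerivAt_iff_tendsto_slope.mp (Real.hasDerivAt_sinh 0)
      rw [Real.cosh_zero] at h
      have h' := h.mono_left (nhdsWithin_mono 0 (fun y (hy : y ∈ Set.Ioi 0) => ne_of_gt hy))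
      apply h'.congr'
      filter_upwards [self_mem_nhdsWithin] with y hy
      simp [slope_def_field, Real.sinh_zero]
    have hcosh : Filter.Tendsto (fun y : ℝ => Real.cosh y) (nhdsWithin 0 (Set.Ioi 0)) (nhds 1) := by
      have : Filter.Tendsto Real.cosh (nhds 0) (nhds 1) := by
        simpa using Real.continuous_cosh.tendsto 0
      exact this.mono_left nhdsWithin_le_nhds
    have h3 : Filter.Tendsto (fun y : ℝ => 1 + Real.cosh y - Real.sinh y / y)
        (nhdsWithin 0 (Set.Ioi 0)) (nhds (1 + 1 - 1)) :=
      (((tendsto_const_nhds : Filter.Tendsto (fun _ : ℝ => (1:ℝ))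
        (nhdsWithin 0 (Set.Ioi 0)) (nhds 1)).add hcosh).sub h1)
    rw [show (1:ℝ) + 1 - 1 = 1 by norm_num] at h3
    have h4 : Filter.Tendsto (fun y : ℝ => Real.log (1 + Real.cosh y - Real.sinh y / y))
        (nhdsWithin 0 (Set.Ioi 0)) (nhds 0) := by
      have hlog := (Real.continuousAt_log (by norm_num : (1:ℝ) ≠ 0)).tendsto
      rw [Real.log_one] at hlog
      exact hlog.comp h3
    have h5 : Filter.Tendsto (fun y : ℝ => Real.cosh y / (Real.sinh y / y))
        (nhdsWithin 0 (Set.Ioi 0)) (nhds (1 / 1)) := hcosh.div h1 one_ne_zero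
    rw [show (1:ℝ) / 1 = 1 by norm_num] at h5
    have h6 : Filter.Tendsto (fun y : ℝ =>
        Real.log (1 + Real.cosh y - Real.sinh y / y) - Real.cosh y / (Real.sinh y / y) + 1)
        (nhdsWithin 0 (Set.Ioi 0)) (nhds (0 - 1 + 1)) :=
      ((h4.sub h5).add (tendsto_const_nhds : Filter.Tendsto (fun _ : ℝ => (1:ℝ))
        (nhdsWithin 0 (Set.Ioi 0)) (nhds 1)))
    rw [show (0:ℝ) - 1 + 1 = 0 by norm_num] at h6
    apply h6.congr'
    filter_upwards [self_mem_nhdsWithin] with y hy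
    have hy' : (0:ℝ) < y := hy
    have hs0 := hsp y hy'
    have hD0 := hDp y hy'
    have hyne : y ≠ 0 := ne_of_gt hy'
    have e1 : 1 + Real.cosh y - Real.sinh y / y = (y + y * Real.cosh y - Real.sinh y) / y := by
      field_simp
    have e2 : Real.cosh y / (Real.sinh y / y) = y * Real.cosh y / Real.sinh y := by
      field_simp
    rw [e1, e2, Real.log_div (ne_of_gt hD0) hyne]
  have hFnonneg : ∀ z : ℝ, 0 < z → 0 ≤ F z := by
    intro z hz
    apply le_of_tendsto hlim
    filter_upwards [Ioo_mem_nhdsGT_of_mem (Set.left_mem_Ico.mpr hz)] with y hy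
    exact (hmono hy.1 hz hy.2).le
  have hFpos : 0 < F x := lt_of_le_of_lt (hFnonneg (x/2) (by linarith))
    (hmono (Set.mem_Ioi.mpr (by linarith)) (Set.mem_Ioi.mpr hx) (by linarith))
  have hkey : x * Real.cosh x / Real.sinh x - 1
      < Real.log (x + x * Real.cosh x - Real.sinh x) - Real.log x := by
    have hfx : 0 < Real.log (x + x * Real.cosh x - Real.sinh x) - Real.log x
        - x * Real.cosh x / Real.sinh x + 1 := by
      have h := hFpos
      rw [hF] at h
      simpa using h
    linarith
  have h7 := Real.exp_lt_exp.mpr hkey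
  rw [← Real.log_div (ne_of_gt (hDp x hx)) (ne_of_gt hx)] at h7
  rw [Real.exp_log (div_pos (hDp x hx) hx)] at h7
  have h8 : (x + x * Real.cosh x - Real.sinh x) / x
      = 1 + (x * Real.cosh x - Real.sinh x) / x := by
    field_simp
    ring
  rw [h8] at h7
  exact h7
private theorem main_ineq (a b : ℝ) (ha : 0 < a) (hb : 0 < b) (hba : b < a) :
    L (I a b) (G a b) < L a b := by
  set x := (Real.log a - Real.log b) / 2 with hxdef
  have hx : 0 < x := by
    have := Real.log_lt_log hb hba
    unfold x
    linarith
  have hgpos : 0 < Real.sqrt (a * b) := Real.sqrt_pos.mpr (by positivity)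
  set g := Real.sqrt (a * b) with hgdef
  have hexpa : Real.exp x = Real.sqrt (a / b) := by
    rw [Real.sqrt_eq_rpow, Real.rpow_def_of_pos (by positivity),
      Real.log_div (ne_of_gt ha) (ne_of_gt hb)]
    congr 1
    unfold x
    ring
  have hexpb : Real.exp (-x) = Real.sqrt (b / a) := by
    rw [Real.sqrt_eq_rpow, Real.rpow_def_of_pos (by positivity),
      Real.log_div (ne_of_gt hb) (ne_of_gt ha)]
    congr 1
    unfold x
    ring
  have hA : g * Real.exp x = a := by
    rw [hexpa, hgdef, ← Real.sqrt_mul (by positivity),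
      show a * b * (a / b) = a ^ 2 by field_simp, Real.sqrt_sq ha.le]
  have hB : g * Real.exp (-x) = b := by
    rw [hexpb, hgdef, ← Real.sqrt_mul (by positivity),
      show a * b * (b / a) = b ^ 2 by field_simp, Real.sqrt_sq hb.le]
  have hloga : Real.log a = Real.log g + x := by
    rw [← hA, Real.log_mul (ne_of_gt hgpos) (Real.exp_ne_zero x), Real.log_exp]
  have hlogb : Real.log b = Real.log g - x := by
    rw [← hB, Real.log_mul (ne_of_gt hgpos) (Real.exp_ne_zero (-x)), Real.log_exp]
    ring
  set s := Real.sinh x with hsdef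
  set c := Real.cosh x with hcdef
  have hs0 : 0 < s := Real.sinh_pos_iff.mpr hx
  have hsub : a - b = g * (2 * s) := by
    rw [hsdef, Real.sinh_eq, ← hA, ← hB]
    ring
  have hadd : a + b = g * (2 * c) := by
    rw [hcdef, Real.cosh_eq, ← hA, ← hB]
    ring
  have hlogdiff : Real.log a - Real.log b = 2 * x := by
    rw [hloga, hlogb]; ring
  have hL : L a b = g * s / x := by
    unfold L
    rw [hsub, hlogdiff]
    rw [show g * (2 * s) / (2 * x) = g * s / x by
      rw [div_eq_div_iff (by positivity) (ne_of_gt hx)]; ring]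
  have hG : G a b = g := rfl
  set u := x * c / s - 1 with hudef
  have hscu : s * u = x * c - s := by
    unfold u
    field_simp
  have hu : 0 < u := by
    have hp := sinh_lt_mul_cosh x hx
    have hueq : u = (x * c - s) / s := by
      unfold u
      field_simp
    rw [hueq]
    exact div_pos (by rw [← hsdef] at hp; linarith) hs0
  have hXpos : (0:ℝ) < a ^ a / b ^ b :=
    div_pos (Real.rpow_pos_of_pos ha a) (Real.rpow_pos_of_pos hb b)
  have hIpos : 0 < I a b := by
    unfold I
    positivity
  have he1 : Real.log (I a b) = -1 + (a * Real.log a - b * Real.log b) / (a - b) := by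
    unfold I
    rw [Real.log_mul (one_div_ne_zero (Real.exp_ne_zero 1))
      (ne_of_gt (Real.rpow_pos_of_pos hXpos _))]
    rw [one_div, Real.log_inv, Real.log_exp, Real.log_rpow hXpos,
      Real.log_div (ne_of_gt (Real.rpow_pos_of_pos ha a)) (ne_of_gt (Real.rpow_pos_of_pos hb b)),
      Real.log_rpow ha, Real.log_rpow hb]
    ring
  have he2 : (a * Real.log a - b * Real.log b) / (a - b) = Real.log g + x * c / s := by
    rw [hloga, hlogb]
    rw [show a * (Real.log g + x) - b * (Real.log g - x)
      = (a - b) * Real.log g + (a + b) * x by ring]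
    rw [hsub, hadd]
    rw [div_eq_iff (by positivity : g * (2 * s) ≠ 0)]
    field_simp
  have hlogI : Real.log (I a b) = Real.log g + u := by
    rw [he1, he2]
    unfold u
    ring
  have hI : I a b = g * Real.exp u := by
    rw [← Real.exp_log hIpos, hlogI, Real.exp_add, Real.exp_log hgpos]
  have hLIG : L (I a b) (G a b) = g * (Real.exp u - 1) / u := by
    unfold L
    rw [hI, hG, Real.log_mul (ne_of_gt hgpos) (Real.exp_ne_zero u), Real.log_exp,
      show Real.log g + u - Real.log g = u by ring,
      show g * Real.exp u - g = g * (Real.exp u - 1) by ring]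
  rw [hLIG, hL, div_lt_div_iff₀ hu hx]
  have hcore := core_ineq x hx
  rw [← hsdef, ← hcdef] at hcore
  have hexpu : Real.exp u < 1 + s * u / x := by
    rw [show Real.exp u = Real.exp (x * c / s - 1) from rfl, hscu]
    exact hcore
  have hsux : s * u / x * x = s * u := by
    field_simp
  calc g * (Real.exp u - 1) * x < g * (s * u / x) * x := by
        apply mul_lt_mul_of_pos_right _ hx
        apply mul_lt_mul_of_pos_left _ hgpos
        linarith
    _ = g * s * u := by
        rw [mul_assoc, hsux]; ring
private lemma L_symm (a b : ℝ) : L a b = L b a := by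
  unfold L
  rw [show a - b = -(b - a) by ring,
    show Real.log a - Real.log b = -(Real.log b - Real.log a) by ring, neg_div_neg_eq]

private lemma G_symm (a b : ℝ) : G a b = G b a := by
  unfold G
  rw [mul_comm]

private lemma I_symm (a b : ℝ) (ha : 0 < a) (hb : 0 < b) : I a b = I b a := by
  unfold I
  have hX : (0:ℝ) < a ^ a / b ^ b :=
    div_pos (Real.rpow_pos_of_pos ha a) (Real.rpow_pos_of_pos hb b)
  congr 1
  rw [show (b:ℝ) ^ b / a ^ a = (a ^ a / b ^ b)⁻¹ by rw [inv_div],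
    Real.inv_rpow hX.le, ← Real.rpow_neg hX.le]
  congr 1
  rw [show b - a = -(a - b) by ring, one_div, one_div, inv_neg, neg_neg]

theorem stmt_6 (a b : ℝ) (ha : 0 < a) (hb : 0 < b) (hab : a ≠ b) :
    L (I a b) (G a b) < L a b := by
  rcases lt_or_gt_of_ne hab with h | h
  · rw [L_symm a b, I_symm a b ha hb, G_symm a b]
    exact main_ineq b a hb ha h
  · exact main_ineq a b ha hb h
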